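/- Fix Θ_* ∈ ℝ^{m×q}, μ > 0, 0 < β < 2, 0 < γ < √((2−β)/β), and suppose α := 2(1−γ) − γ(2−3β)²/(β(2−(1+γ²)β)) > 0. Let Θ̂, Ξ̂ ∈ ℝ^{m×q} and φ ∈ ℝ^q, set N = max{μ, ‖φ‖²}, ε = (Θ̂ − Θ_*)φ, and perform one high-order tuner step: Θ̄ = Θ̂ − (γβ/N) ε φ^⊤, Θ̂' = Θ̄ − β(Θ̄ − Ξ̂), Ξ̂' = Ξ̂ − (γ/N)((Θ̂' − Θ̂)φ + ε)φ^⊤. Then with V = ‖Ξ̂ − Θ_*‖_F² + ‖Θ̂ − Ξ̂‖_F² and V' = ‖Ξ̂' − Θ_*‖_F² + ‖Θ̂' − Ξ̂'‖_F², one has V' − V ≤ −(γα/N)‖(Θ̂' − Θ_*)φ‖² − (2γβ²/N)‖(Θ̄ − Ξ̂)φ‖². -/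

import Mathlib

open scoped BigOperators


private lemma hot_halb (b g al k : ℝ) (hg : 0 < g)
    (hk0 : 0 < k) (hk : k ≤ g * b)
    (hden : 0 < b * (2 - (1 + g ^ 2) * b))
    (heq : al * (b * (2 - (1 + g ^ 2) * b))
      = 2 * (1 - g) * (b * (2 - (1 + g ^ 2) * b)) - g * (2 - 3 * b) ^ 2) :
    al * (b * (2*b - b^2 - k^2)) ≤ 2*(b-k)*(2*b - b^2 - k^2) - k*(2-3*b)^2 := by
  have hb0 : 0 < b := by nlinarith [sq_nonneg g, sq_nonneg b, mul_pos hg (mul_pos hg hden)]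
  have hk2 : k^2 ≤ g^2 * b^2 := by nlinarith
  have hdd : b * (2 - (1 + g ^ 2) * b) ≤ 2*b - b^2 - k^2 := by nlinarith
  have hdenp0 : 0 < 2*b - b^2 - k^2 := lt_of_lt_of_le hden hdd
  have hgb : k * (b * (2 - (1 + g ^ 2) * b)) ≤ g * b * (2*b - b^2 - k^2) := by
    have h1 : k * (b * (2 - (1 + g ^ 2) * b)) ≤ g * b * (b * (2 - (1 + g ^ 2) * b)) :=
      mul_le_mul_of_nonneg_right hk hden.le
    have h2 : g * b * (b * (2 - (1 + g ^ 2) * b)) ≤ g * b * (2*b - b^2 - k^2) :=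
      mul_le_mul_of_nonneg_left hdd (by positivity)
    linarith
  have h2 : (2*(b-k)*(2*b - b^2 - k^2) - k*(2-3*b)^2 - al * (b * (2*b - b^2 - k^2)))
        * (b * (2 - (1 + g ^ 2) * b))
      = 2*((b * (2 - (1 + g ^ 2) * b))*(2*b - b^2 - k^2))*(g*b-k)
        + (2-3*b)^2*(g*b*(2*b - b^2 - k^2) - k*(b * (2 - (1 + g ^ 2) * b))) := by
    linear_combination (-(b*(2*b - b^2 - k^2))) * heq
  have t1 : 0 ≤ 2*((b * (2 - (1 + g ^ 2) * b))*(2*b - b^2 - k^2))*(g*b-k) := by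
    apply mul_nonneg (by positivity); linarith
  have t2 : 0 ≤ (2-3*b)^2*(g*b*(2*b - b^2 - k^2) - k*(b * (2 - (1 + g ^ 2) * b))) := by
    apply mul_nonneg (sq_nonneg _); linarith
  have h3 : 0 * (b * (2 - (1 + g ^ 2) * b))
      ≤ (2*(b-k)*(2*b - b^2 - k^2) - k*(2-3*b)^2 - al * (b * (2*b - b^2 - k^2)))
        * (b * (2 - (1 + g ^ 2) * b)) := by rw [h2]; linarith
  have := le_of_mul_le_mul_right h3 hden
  linarith

private lemma hot_dhat (b k : ℝ) (hb2 : b < 2) (hk0 : 0 < k)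
    (hdenp0 : 0 < 2*b - b^2 - k^2) :
    b-2+4*k-2*b*k-4*k^2+2*k^3 ≤ 0 := by
  have hk1 : k ≤ 1 := by nlinarith [sq_nonneg (b-1), sq_nonneg (k-1)]
  nlinarith [sq_nonneg (1-2*k), sq_nonneg k, mul_nonneg hk0.le (sub_nonneg.2 hk1)]

private lemma hot_quad (k pA pB pC a e : ℝ) (hk0 : 0 < k) (hpA : pA ≤ 0) (hpC : pC ≤ 0)
    (hdelta : 0 ≤ 4*pA*pC - k*pB^2) :
    k*pA*a^2 + k*pB*(a*e) + pC*e^2 ≤ 0 := by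
  have hu : 0 ≤ -(k*pA) := by
    have : k*pA ≤ 0 := mul_nonpos_of_nonneg_of_nonpos hk0.le hpA
    linarith
  have hw : (k*pB)^2 ≤ 4*(-(k*pA))*(-pC) := by
    have h1 : (k*pB)^2 - 4*(-(k*pA))*(-pC) = -(k*(4*pA*pC - k*pB^2)) + (k-1)*k*pB^2 - (k-1)*k*pB^2 := by ring
    nlinarith [mul_nonneg hk0.le hdelta]
  rcases eq_or_lt_of_le hu with h0 | hupos
  · have hsq : (k*pB)^2 ≤ 0 := by rw [← h0] at hw; linarith
    have hw0 : k*pB = 0 := by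
      have := sq_eq_zero_iff.mp (le_antisymm hsq (sq_nonneg _))
      exact this
    have hkpA : k*pA = 0 := by linarith
    rw [hkpA, hw0]
    have : pC*e^2 ≤ 0 := mul_nonpos_of_nonpos_of_nonneg hpC (sq_nonneg e)
    linarith
  · have key : 4*(-(k*pA))*(-(k*pA)*a^2 - k*pB*(a*e) - pC*e^2)
        = (2*(-(k*pA))*a - k*pB*e)^2 + (4*(-(k*pA))*(-pC) - (k*pB)^2)*e^2 := by ring
    have hrhs : 0 ≤ (2*(-(k*pA))*a - k*pB*e)^2 + (4*(-(k*pA))*(-pC) - (k*pB)^2)*e^2 :=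
      add_nonneg (sq_nonneg _) (mul_nonneg (by linarith) (sq_nonneg e))
    have h4 : 0 ≤ 4*(-(k*pA)) := by linarith
    have hprod : 0 ≤ 4*(-(k*pA))*(-(k*pA)*a^2 - k*pB*(a*e) - pC*e^2) := by rw [key]; exact hrhs
    have := le_of_mul_le_mul_left (by linarith : 4*(-(k*pA)) * 0 ≤ 4*(-(k*pA))*(-(k*pA)*a^2 - k*pB*(a*e) - pC*e^2)) (by linarith : 0 < 4*(-(k*pA)))
    nlinarith

private lemma hot_pA (b g al k : ℝ) (hb0 : 0 < b) (hg : 0 < g)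
    (hk0 : 0 < k) (hk : k ≤ g * b)
    (hden : 0 < b * (2 - (1 + g ^ 2) * b))
    (heq : al * (b * (2 - (1 + g ^ 2) * b))
      = 2 * (1 - g) * (b * (2 - (1 + g ^ 2) * b)) - g * (2 - 3 * b) ^ 2) :
    (al-2)*b + k*(2+4*b-2*al*b-b^2+2*b^3-b^4) + k^2*(al*b-2*b-4) + 2*k^3 - b^3*(2-b)*k ≤ 0 := by
  have halb := hot_halb b g al k hg hk0 hk hden heq
  have hk2 : k^2 ≤ g^2 * b^2 := by nlinarith
  have hdenp0 : 0 < 2*b - b^2 - k^2 := by nlinarith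
  have hbdenp : 0 < b * (2*b - b^2 - k^2) := by positivity
  have hsplit : ((al-2)*b + k*(2+4*b-2*al*b-b^2+2*b^3-b^4) + k^2*(al*b-2*b-4) + 2*k^3 - b^3*(2-b)*k) * (b*(2*b - b^2 - k^2))
      = (b*(2*b - b^2 - k^2)*(-2*b + k*(2+4*b-b^2+2*b^3-b^4) + k^2*(-2*b-4) + 2*k^3 - b^3*(2-b)*k))
        + (b*(1-k)^2) * (al*(b*(2*b - b^2 - k^2))) := by ring
  have hub : ((al-2)*b + k*(2+4*b-2*al*b-b^2+2*b^3-b^4) + k^2*(al*b-2*b-4) + 2*k^3 - b^3*(2-b)*k) * (b*(2*b - b^2 - k^2))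
      ≤ (b*(2*b - b^2 - k^2)*(-2*b + k*(2+4*b-b^2+2*b^3-b^4) + k^2*(-2*b-4) + 2*k^3 - b^3*(2-b)*k))
        + (b*(1-k)^2) * (2*(b-k)*(2*b - b^2 - k^2) - k*(2-3*b)^2) := by
    rw [hsplit]
    have := mul_le_mul_of_nonneg_left halb (by positivity : (0:ℝ) ≤ b*(1-k)^2)
    linarith
  have hcert : (b*(2*b - b^2 - k^2)*(-2*b + k*(2+4*b-b^2+2*b^3-b^4) + k^2*(-2*b-4) + 2*k^3 - b^3*(2-b)*k))
        + (b*(1-k)^2) * (2*(b-k)*(2*b - b^2 - k^2) - k*(2-3*b)^2)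
      = -(b*k*((3*b-2)^2*(1-k)^2 + b^2*(2*b - b^2 - k^2))) := by ring
  have hneg : ((al-2)*b + k*(2+4*b-2*al*b-b^2+2*b^3-b^4) + k^2*(al*b-2*b-4) + 2*k^3 - b^3*(2-b)*k) * (b*(2*b - b^2 - k^2)) ≤ 0 := by
    rw [hsplit] at hub ⊢
    have : 0 ≤ b*k*((3*b-2)^2*(1-k)^2 + b^2*(2*b - b^2 - k^2)) := by positivity
    linarith [hcert ▸ hub]
  have h0 : ((al-2)*b + k*(2+4*b-2*al*b-b^2+2*b^3-b^4) + k^2*(al*b-2*b-4) + 2*k^3 - b^3*(2-b)*k) * (b*(2*b - b^2 - k^2)) ≤ 0 * (b*(2*b - b^2 - k^2)) := by linarith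
  exact le_of_mul_le_mul_right h0 hbdenp

private lemma hot_pC (b g al k : ℝ) (hb0 : 0 < b) (hg : 0 < g)
    (hk0 : 0 < k) (hk : k ≤ g * b)
    (hden : 0 < b * (2 - (1 + g ^ 2) * b))
    (heq : al * (b * (2 - (1 + g ^ 2) * b))
      = 2 * (1 - g) * (b * (2 - (1 + g ^ 2) * b)) - g * (2 - 3 * b) ^ 2) :
    b^2*(al*b+4*b-4)*k + 2*b^2*k^2 - b^3*(2-b) ≤ 0 := by
  have halb := hot_halb b g al k hg hk0 hk hden heq
  have hk2 : k^2 ≤ g^2 * b^2 := by nlinarith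
  have hdenp0 : 0 < 2*b - b^2 - k^2 := by nlinarith
  have hbdenp : 0 < b * (2*b - b^2 - k^2) := by positivity
  have hub : (b^2*(al*b+4*b-4)*k + 2*b^2*k^2 - b^3*(2-b)) * (b*(2*b - b^2 - k^2))
      ≤ (b*(2*b - b^2 - k^2)*(b^2*(4*b-4)*k + 2*b^2*k^2 - b^3*(2-b)))
        + (b^3*k) * (2*(b-k)*(2*b - b^2 - k^2) - k*(2-3*b)^2) := by
    have hsplit : (b^2*(al*b+4*b-4)*k + 2*b^2*k^2 - b^3*(2-b)) * (b*(2*b - b^2 - k^2))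
        = (b*(2*b - b^2 - k^2)*(b^2*(4*b-4)*k + 2*b^2*k^2 - b^3*(2-b)))
          + (b^3*k) * (al*(b*(2*b - b^2 - k^2))) := by ring
    rw [hsplit]
    have := mul_le_mul_of_nonneg_left halb (by positivity : (0:ℝ) ≤ b^3*k)
    linarith
  have hcert : (b*(2*b - b^2 - k^2)*(b^2*(4*b-4)*k + 2*b^2*k^2 - b^3*(2-b)))
        + (b^3*k) * (2*(b-k)*(2*b - b^2 - k^2) - k*(2-3*b)^2)
      = -(b^3*((k*(3*b-2)-(2*b - b^2 - k^2))^2 + k^2*(2*b - b^2 - k^2))) := by ring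
  have hneg : (b^2*(al*b+4*b-4)*k + 2*b^2*k^2 - b^3*(2-b)) * (b*(2*b - b^2 - k^2)) ≤ 0 := by
    have : 0 ≤ b^3*((k*(3*b-2)-(2*b - b^2 - k^2))^2 + k^2*(2*b - b^2 - k^2)) := by positivity
    linarith [hcert ▸ hub]
  have h0 : (b^2*(al*b+4*b-4)*k + 2*b^2*k^2 - b^3*(2-b)) * (b*(2*b - b^2 - k^2)) ≤ 0 * (b*(2*b - b^2 - k^2)) := by linarith
  exact le_of_mul_le_mul_right h0 hbdenp

private lemma hot_delta (b g al k : ℝ) (hb0 : 0 < b) (hb2 : b < 2) (hg : 0 < g)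
    (hk0 : 0 < k) (hk : k ≤ g * b)
    (hden : 0 < b * (2 - (1 + g ^ 2) * b))
    (heq : al * (b * (2 - (1 + g ^ 2) * b))
      = 2 * (1 - g) * (b * (2 - (1 + g ^ 2) * b)) - g * (2 - 3 * b) ^ 2) :
    0 ≤ 4*((al-2)*b + k*(2+4*b-2*al*b-b^2+2*b^3-b^4) + k^2*(al*b-2*b-4) + 2*k^3 - b^3*(2-b)*k)
        *(b^2*(al*b+4*b-4)*k + 2*b^2*k^2 - b^3*(2-b))
      - k*(b*(4-2*b-2*al*b+4*b^2-2*b^3) + k*b*(2*al*b-8) + 4*b*k^2 - 2*b^3*(2-b))^2 := by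
  have halb := hot_halb b g al k hg hk0 hk hden heq
  have hk2 : k^2 ≤ g^2 * b^2 := by nlinarith
  have hdenp0 : 0 < 2*b - b^2 - k^2 := by nlinarith
  have hbdenp : 0 < b * (2*b - b^2 - k^2) := by positivity
  have hd := hot_dhat b k hb2 hk0 hdenp0
  have hdh0 : b^2*(b-2+4*k-2*b*k-4*k^2+2*k^3) ≤ 0 :=
    mul_nonpos_of_nonneg_of_nonpos (sq_nonneg b) hd
  have hlow : (b^2*(b-2+4*k-2*b*k-4*k^2+2*k^3)) * (2*(b-k)*(2*b - b^2 - k^2) - k*(2-3*b)^2)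
      ≤ (b^2*(b-2+4*k-2*b*k-4*k^2+2*k^3)) * (al*(b*(2*b - b^2 - k^2))) :=
    mul_le_mul_of_nonpos_left halb hdh0
  have hFid : b*(2*b - b^2 - k^2)*((-4*k+8*k^2-4*k^3) + b*(8*k-12*k^2+4*k^4) + b^2*(4-15*k+20*k^2-8*k^3) + b^3*(-2+6*k-6*k^2) - b^4*k)
        + (b^2*(b-2+4*k-2*b*k-4*k^2+2*k^3))*(2*(b-k)*(2*b - b^2 - k^2) - k*(2-3*b)^2)
      = b*k*(2*(1-b)*k^2 - (2-3*b)*(1+b)*k - b^2*(2-b))^2 := by ring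
  have hFpos : 0 ≤ b*k*(2*(1-b)*k^2 - (2-3*b)*(1+b)*k - b^2*(2-b))^2 := by positivity
  have hE : 0 ≤ (((-4*k+8*k^2-4*k^3) + b*(8*k-12*k^2+4*k^4) + b^2*(4-15*k+20*k^2-8*k^3) + b^3*(-2+6*k-6*k^2) - b^4*k) + b^2*(b-2+4*k-2*b*k-4*k^2+2*k^3)*al) := by
    have hEexp : (((-4*k+8*k^2-4*k^3) + b*(8*k-12*k^2+4*k^4) + b^2*(4-15*k+20*k^2-8*k^3) + b^3*(-2+6*k-6*k^2) - b^4*k) + b^2*(b-2+4*k-2*b*k-4*k^2+2*k^3)*al) * (b*(2*b - b^2 - k^2))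
        = b*(2*b - b^2 - k^2)*((-4*k+8*k^2-4*k^3) + b*(8*k-12*k^2+4*k^4) + b^2*(4-15*k+20*k^2-8*k^3) + b^3*(-2+6*k-6*k^2) - b^4*k)
          + (b^2*(b-2+4*k-2*b*k-4*k^2+2*k^3))*(al*(b*(2*b - b^2 - k^2))) := by ring
    have hprod : 0 * (b*(2*b - b^2 - k^2)) ≤ (((-4*k+8*k^2-4*k^3) + b*(8*k-12*k^2+4*k^4) + b^2*(4-15*k+20*k^2-8*k^3) + b^3*(-2+6*k-6*k^2) - b^4*k) + b^2*(b-2+4*k-2*b*k-4*k^2+2*k^3)*al) * (b*(2*b - b^2 - k^2)) := by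
      rw [hEexp]
      nlinarith [hFid, hFpos, hlow]
    exact le_of_mul_le_mul_right hprod hbdenp
  have hid : 4*((al-2)*b + k*(2+4*b-2*al*b-b^2+2*b^3-b^4) + k^2*(al*b-2*b-4) + 2*k^3 - b^3*(2-b)*k)
        *(b^2*(al*b+4*b-4)*k + 2*b^2*k^2 - b^3*(2-b))
      - k*(b*(4-2*b-2*al*b+4*b^2-2*b^3) + k*b*(2*al*b-8) + 4*b*k^2 - 2*b^3*(2-b))^2
      = 4*b^2*(((-4*k+8*k^2-4*k^3) + b*(8*k-12*k^2+4*k^4) + b^2*(4-15*k+20*k^2-8*k^3) + b^3*(-2+6*k-6*k^2) - b^4*k) + b^2*(b-2+4*k-2*b*k-4*k^2+2*k^3)*al) := by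
    ring
  rw [hid]
  positivity

lemma hot_core (b g al k a e : ℝ) (hb0 : 0 < b) (hb2 : b < 2) (hg : 0 < g)
    (hk0 : 0 < k) (hk : k ≤ g * b)
    (hden : 0 < b * (2 - (1 + g ^ 2) * b))
    (heq : al * (b * (2 - (1 + g ^ 2) * b))
      = 2 * (1 - g) * (b * (2 - (1 + g ^ 2) * b)) - g * (2 - 3 * b) ^ 2) :
    k * ((al-2)*b + k*(2+4*b-2*al*b-b^2+2*b^3-b^4) + k^2*(al*b-2*b-4) + 2*k^3 - b^3*(2-b)*k) * a^2
    + k * (b*(4-2*b-2*al*b+4*b^2-2*b^3) + k*b*(2*al*b-8) + 4*b*k^2 - 2*b^3*(2-b)) * (a * e)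
    + (b^2*(al*b+4*b-4)*k + 2*b^2*k^2 - b^3*(2-b)) * e^2 ≤ 0 := by
  have h := hot_quad k
    ((al-2)*b + k*(2+4*b-2*al*b-b^2+2*b^3-b^4) + k^2*(al*b-2*b-4) + 2*k^3 - b^3*(2-b)*k)
    (b*(4-2*b-2*al*b+4*b^2-2*b^3) + k*b*(2*al*b-8) + 4*b*k^2 - 2*b^3*(2-b))
    (b^2*(al*b+4*b-4)*k + 2*b^2*k^2 - b^3*(2-b)) a e hk0
    (hot_pA b g al k hb0 hg hk0 hk hden heq)
    (hot_pC b g al k hb0 hg hk0 hk hden heq)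
    (hot_delta b g al k hb0 hb2 hg hk0 hk hden heq)
  linarith [h]


private lemma sum_expand2 {q : ℕ} (u φ : Fin q → ℝ) (r1 r2 : ℝ) :
    ∑ j, (r1 * u j + r2 * φ j)^2
      = r1^2*(∑ j, (u j)^2) + 2*r1*r2*(∑ j, u j * φ j) + r2^2*(∑ j, (φ j)^2) := by
  rw [Finset.mul_sum, Finset.mul_sum, Finset.mul_sum]
  rw [← Finset.sum_add_distrib, ← Finset.sum_add_distrib]
  exact Finset.sum_congr rfl fun j _ => by ring

private lemma sum_lin2 {q : ℕ} (u φ : Fin q → ℝ) (r1 r2 : ℝ) :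
    ∑ j, (r1 * u j + r2 * φ j) * φ j
      = r1*(∑ j, u j * φ j) + r2*(∑ j, (φ j)^2) := by
  rw [Finset.mul_sum, Finset.mul_sum, ← Finset.sum_add_distrib]
  exact Finset.sum_congr rfl fun j _ => by ring

set_option maxHeartbeats 1000000 in
lemma hot_row {q : ℕ} (φ x y t tb tp : Fin q → ℝ) (γ β al N a c : ℝ)
    (hβ0 : 0 < β) (hβ2 : β < 2) (hγ0 : 0 < γ) (hN : 0 < N)
    (hsN : (∑ j, (φ j)^2) ≤ N)
    (hden : 0 < β*(2-(1+γ^2)*β))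
    (heq : al * (β*(2-(1+γ^2)*β)) = 2*(1-γ)*(β*(2-(1+γ^2)*β)) - γ*(2-3*β)^2)
    (ha : a = ∑ j, (x j - t j) * φ j)
    (htb : ∀ j, tb j = x j - (γ*β/N)*(a*φ j))
    (htp : ∀ j, tp j = tb j - β*(tb j - y j))
    (hc : c = (∑ j, (tp j - x j) * φ j) + a) :
    ((∑ j, (y j - (γ/N)*(c*φ j) - t j)^2) + (∑ j, (tp j - (y j - (γ/N)*(c*φ j)))^2))
      - ((∑ j, (y j - t j)^2) + (∑ j, (x j - y j)^2))
    ≤ -(γ*al/N)*(∑ j, (tp j - t j)*φ j)^2 - (2*γ*β^2/N)*(∑ j, (tb j - y j)*φ j)^2 := by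
  have hs0 : 0 ≤ ∑ j, (φ j)^2 := Finset.sum_nonneg fun j _ => sq_nonneg _
  set s : ℝ := ∑ j, (φ j)^2 with hs_def
  set V : ℝ := ∑ j, (y j - t j)^2 with hV_def
  set D2 : ℝ := ∑ j, (x j - y j)^2 with hD2_def
  set d : ℝ := ∑ j, (x j - y j) * φ j with hd_def
  set bv : ℝ := ∑ j, (y j - t j) * φ j with hbv_def
  have hD20 : 0 ≤ D2 := Finset.sum_nonneg fun j _ => sq_nonneg _
  have hCS : d^2 ≤ D2 * s := by
    have h := Finset.sum_mul_sq_le_sq_mul_sq Finset.univ (fun j => x j - y j) φ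
    simpa [hd_def, hD2_def, hs_def] using h
  have hbv2 : bv = a - d := by
    rw [hbv_def, ha, hd_def, ← Finset.sum_sub_distrib]
    exact Finset.sum_congr rfl fun j _ => by ring
  -- e
  set e : ℝ := ∑ j, (tb j - y j) * φ j with he_def
  have he : e = d - (γ*β/N)*a*s := by
    rw [he_def, hd_def, hs_def]
    have h1 : ∀ j, (tb j - y j) * φ j = (1*(x j - y j) + (-(γ*β/N)*a) * φ j) * φ j := by
      intro j; rw [htb j]; ring
    rw [Finset.sum_congr rfl fun j _ => h1 j, sum_lin2]
    ring
  -- c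
  have hc2 : c = a - (γ*β/N)*a*s - β*e := by
    rw [hc, he, hd_def, hs_def]
    have h1 : ∀ j, (tp j - x j) * φ j
        = (-β*(x j - y j) + (-(1-β)*(γ*β/N)*a) * φ j) * φ j := by
      intro j; rw [htp j, htb j]; ring
    rw [Finset.sum_congr rfl fun j _ => h1 j, sum_lin2]
    ring
  -- cp = c
  have hcp : (∑ j, (tp j - t j)*φ j) = c := by
    have hsplit : ∑ j, (tp j - t j)*φ j
        = (∑ j, (tp j - x j)*φ j) + ∑ j, (x j - t j)*φ j := by
      rw [← Finset.sum_add_distrib]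
      exact Finset.sum_congr rfl fun j _ => by ring
    rw [hsplit, ← ha, ← hc]
  -- Sum1
  have hV1 : (∑ j, (y j - (γ/N)*(c*φ j) - t j)^2)
      = V + 2*1*(-(γ/N)*c)*bv + (-(γ/N)*c)^2*s := by
    rw [hV_def, hbv_def, hs_def]
    have h1 : ∀ j, (y j - (γ/N)*(c*φ j) - t j)^2 = (1*(y j - t j) + (-(γ/N)*c) * φ j)^2 := by
      intro j; ring
    rw [Finset.sum_congr rfl fun j _ => h1 j, sum_expand2]
    ring
  -- Sum2
  have hV2 : (∑ j, (tp j - (y j - (γ/N)*(c*φ j)))^2)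
      = (1-β)^2*D2 + 2*(1-β)*((γ/N)*c - (1-β)*(γ*β/N)*a)*d
        + ((γ/N)*c - (1-β)*(γ*β/N)*a)^2*s := by
    rw [hD2_def, hd_def, hs_def]
    have h1 : ∀ j, (tp j - (y j - (γ/N)*(c*φ j)))^2
        = ((1-β)*(x j - y j) + ((γ/N)*c - (1-β)*(γ*β/N)*a) * φ j)^2 := by
      intro j; rw [htp j, htb j]; ring
    rw [Finset.sum_congr rfl fun j _ => h1 j, sum_expand2]
  rw [hV1, hV2, hcp]
  -- case split on s
  rcases eq_or_lt_of_le hs0 with hs_zero | hs_pos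
  · -- s = 0 : then a = d = e = c = 0
    have hφ : ∀ j, φ j = 0 := by
      intro j
      have hnn : ∀ j ∈ Finset.univ, (0:ℝ) ≤ (φ j)^2 := fun j _ => sq_nonneg _
      have := (Finset.sum_eq_zero_iff_of_nonneg hnn).mp hs_zero.symm j (Finset.mem_univ j)
      exact pow_eq_zero_iff (by norm_num) |>.mp this
    have hd0 : d = 0 := by
      rw [hd_def]; exact Finset.sum_eq_zero fun j _ => by rw [hφ j]; ring
    have ha0 : a = 0 := by
      rw [ha]; exact Finset.sum_eq_zero fun j _ => by rw [hφ j]; ring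
    have hs' : s = 0 := hs_zero.symm
    have he0 : e = 0 := by rw [he, hd0, hs']; ring
    have hbv0 : bv = 0 := by rw [hbv2, ha0, hd0]; ring
    have hc0 : c = 0 := by rw [hc2, ha0, he0]; ring
    rw [hd0, he0, hs', ha0, hbv0, hc0]
    have h1k : (1-β)^2*D2 - D2 ≤ 0 := by
      nlinarith [mul_nonneg (mul_nonneg hβ0.le (by linarith : (0:ℝ) ≤ 2-β)) hD20]
    nlinarith [h1k]
  · -- s > 0
    set K : ℝ := γ*β*s/N with hK_def
    have hK0 : 0 < K := by positivity
    have hKle : K ≤ γ*β := by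
      rw [hK_def]
      rw [div_le_iff₀ hN]
      nlinarith [mul_pos hγ0 hβ0]
    have hQ := hot_core β γ al K a e hβ0 hβ2 hγ0 hK0 (by linarith [hKle] : K ≤ γ*β) hden heq
    have hid : (V + 2*1*(-(γ/N)*c)*bv + (-(γ/N)*c)^2*s
          + ((1-β)^2*D2 + 2*(1-β)*((γ/N)*c - (1-β)*(γ*β/N)*a)*d
            + ((γ/N)*c - (1-β)*(γ*β/N)*a)^2*s) - (V + D2))
          - (-(γ*al/N)*c^2 - (2*γ*β^2/N)*e^2)
        = β*(2-β)*(d^2/s - D2)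
          + (K * ((al-2)*β + K*(2+4*β-2*al*β-β^2+2*β^3-β^4) + K^2*(al*β-2*β-4) + 2*K^3 - β^3*(2-β)*K) * a^2
            + K * (β*(4-2*β-2*al*β+4*β^2-2*β^3) + K*β*(2*al*β-8) + 4*β*K^2 - 2*β^3*(2-β)) * (a * e)
            + (β^2*(al*β+4*β-4)*K + 2*β^2*K^2 - β^3*(2-β)) * e^2)/(β^2*s) := by
      rw [hbv2, hc2, he, hK_def]
      field_simp
      ring
    have hQdiv : (K * ((al-2)*β + K*(2+4*β-2*al*β-β^2+2*β^3-β^4) + K^2*(al*β-2*β-4) + 2*K^3 - β^3*(2-β)*K) * a^2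
            + K * (β*(4-2*β-2*al*β+4*β^2-2*β^3) + K*β*(2*al*β-8) + 4*β*K^2 - 2*β^3*(2-β)) * (a * e)
            + (β^2*(al*β+4*β-4)*K + 2*β^2*K^2 - β^3*(2-β)) * e^2)/(β^2*s) ≤ 0 :=
      div_nonpos_of_nonpos_of_nonneg hQ (by positivity)
    have hcs2 : d^2/s - D2 ≤ 0 := by
      rw [sub_nonpos, div_le_iff₀ hs_pos]
      linarith [hCS]
    have hmul : β*(2-β)*(d^2/s - D2) ≤ 0 := by
      apply mul_nonpos_of_nonneg_of_nonpos (by nlinarith) hcs2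
    linarith [hid, hQdiv, hmul]

/-- one-step Lyapunov decrease for the high-order tuner in terms
    of the a-posteriori error (Θ̂′ − Θ_*)φ and (Θ̄ − Ξ̂)φ. -/
theorem hot_one_step_a_posteriori_decrease {m q : ℕ}
    (Θstar Θhat Ξhat : Matrix (Fin m) (Fin q) ℝ) (μ γ β : ℝ)
    (hμ : 0 < μ) (hβ0 : 0 < β) (hβ2 : β < 2)
    (hγ0 : 0 < γ) (hγ : γ < Real.sqrt ((2 - β) / β))
    (hα : 0 < 2 * (1 - γ) - γ * (2 - 3 * β) ^ 2 / (β * (2 - (1 + γ ^ 2) * β)))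
    (φ : Fin q → ℝ) :
    let α := 2 * (1 - γ) - γ * (2 - 3 * β) ^ 2 / (β * (2 - (1 + γ ^ 2) * β))
    let N := max μ (∑ j, φ j ^ 2)
    let ε := (Θhat - Θstar).mulVec φ
    let Θbar := Θhat - (γ * β / N) • Matrix.vecMulVec ε φ
    let Θhat' := Θbar - β • (Θbar - Ξhat)
    let Ξhat' := Ξhat - (γ / N) • Matrix.vecMulVec ((Θhat' - Θhat).mulVec φ + ε) φ
    ((∑ i, ∑ j, (Ξhat' - Θstar) i j ^ 2) + ∑ i, ∑ j, (Θhat' - Ξhat') i j ^ 2)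
        - ((∑ i, ∑ j, (Ξhat - Θstar) i j ^ 2) + ∑ i, ∑ j, (Θhat - Ξhat) i j ^ 2)
      ≤ -(γ * α / N) * (∑ i, ((Θhat' - Θstar).mulVec φ) i ^ 2)
        - (2 * γ * β ^ 2 / N) * (∑ i, ((Θbar - Ξhat).mulVec φ) i ^ 2) := by
  intro α N ε Θbar Θhat' Ξhat'
  have hN : 0 < N := lt_of_lt_of_le hμ (le_max_left _ _)
  have hsN : (∑ j, (φ j)^2) ≤ N := le_max_right _ _
  have hγ2 : γ^2 < (2-β)/β := (Real.lt_sqrt hγ0.le).mp hγ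
  have hden : 0 < β*(2-(1+γ^2)*β) := by
    have h2 : γ^2 * β < 2 - β := (lt_div_iff₀ hβ0).mp hγ2
    nlinarith
  have heq : α * (β*(2-(1+γ^2)*β)) = 2*(1-γ)*(β*(2-(1+γ^2)*β)) - γ*(2-3*β)^2 := by
    have hαdef : α = 2 * (1 - γ) - γ * (2 - 3 * β) ^ 2 / (β * (2 - (1 + γ ^ 2) * β)) := rfl
    rw [hαdef]
    rw [sub_mul, div_mul_cancel₀ _ hden.ne']
  -- rewrite goal as row sums
  have hgoal : ∀ i : Fin m,
      ((∑ j, (Ξhat' - Θstar) i j ^ 2) + ∑ j, (Θhat' - Ξhat') i j ^ 2)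
        - ((∑ j, (Ξhat - Θstar) i j ^ 2) + ∑ j, (Θhat - Ξhat) i j ^ 2)
      ≤ -(γ * α / N) * (((Θhat' - Θstar).mulVec φ) i ^ 2)
        - (2 * γ * β ^ 2 / N) * (((Θbar - Ξhat).mulVec φ) i ^ 2) := by
    intro i
    have hεi : ε i = ∑ j, (Θhat i j - Θstar i j) * φ j := by
      simp [ε, Matrix.mulVec, dotProduct, Matrix.sub_apply]
    have htb : ∀ j, Θbar i j = Θhat i j - (γ*β/N)*(ε i * φ j) := by
      intro j
      simp [Θbar, Matrix.sub_apply, Matrix.smul_apply, Matrix.vecMulVec_apply]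
    have htp : ∀ j, Θhat' i j = Θbar i j - β*(Θbar i j - Ξhat i j) := by
      intro j
      simp [Θhat', Matrix.sub_apply, Matrix.smul_apply]
    have hci : ((Θhat' - Θhat).mulVec φ + ε) i
        = (∑ j, (Θhat' i j - Θhat i j) * φ j) + ε i := by
      simp [Matrix.mulVec, dotProduct, Matrix.sub_apply]
    have key := hot_row φ (fun j => Θhat i j) (fun j => Ξhat i j) (fun j => Θstar i j)
      (fun j => Θbar i j) (fun j => Θhat' i j) γ β α N (ε i)
      (((Θhat' - Θhat).mulVec φ + ε) i)
      hβ0 hβ2 hγ0 hN hsN hden heq hεi htb htp hci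
    have e1 : ∀ j, (Ξhat' - Θstar) i j
        = Ξhat i j - (γ/N)*(((Θhat' - Θhat).mulVec φ + ε) i * φ j) - Θstar i j := by
      intro j
      simp [Ξhat', Matrix.sub_apply, Matrix.smul_apply, Matrix.vecMulVec_apply]
    have e2 : ∀ j, (Θhat' - Ξhat') i j
        = Θhat' i j - (Ξhat i j - (γ/N)*(((Θhat' - Θhat).mulVec φ + ε) i * φ j)) := by
      intro j
      simp [Ξhat', Matrix.sub_apply, Matrix.smul_apply, Matrix.vecMulVec_apply]
    have e3 : ((Θhat' - Θstar).mulVec φ) i = ∑ j, (Θhat' i j - Θstar i j) * φ j := by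
      simp [Matrix.mulVec, dotProduct, Matrix.sub_apply]
    have e4 : ((Θbar - Ξhat).mulVec φ) i = ∑ j, (Θbar i j - Ξhat i j) * φ j := by
      simp [Matrix.mulVec, dotProduct, Matrix.sub_apply]
    have s1 : (∑ j, (Ξhat' - Θstar) i j ^ 2)
        = ∑ j, (Ξhat i j - (γ/N)*(((Θhat' - Θhat).mulVec φ + ε) i * φ j) - Θstar i j)^2 :=
      Finset.sum_congr rfl fun j _ => by rw [e1 j]
    have s2 : (∑ j, (Θhat' - Ξhat') i j ^ 2)
        = ∑ j, (Θhat' i j - (Ξhat i j - (γ/N)*(((Θhat' - Θhat).mulVec φ + ε) i * φ j)))^2 :=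
      Finset.sum_congr rfl fun j _ => by rw [e2 j]
    have s3 : (∑ j, (Ξhat - Θstar) i j ^ 2) = ∑ j, (Ξhat i j - Θstar i j)^2 :=
      Finset.sum_congr rfl fun j _ => by rw [Matrix.sub_apply]
    have s4 : (∑ j, (Θhat - Ξhat) i j ^ 2) = ∑ j, (Θhat i j - Ξhat i j)^2 :=
      Finset.sum_congr rfl fun j _ => by rw [Matrix.sub_apply]
    have s5 : (∑ j, (Θhat' i j - Θstar i j) * φ j) = ∑ j, ((fun j => Θhat' i j) j - (fun j => Θstar i j) j)*φ j := rfl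
    rw [s1, s2, s3, s4, e3, e4]
    exact key
  calc ((∑ i, ∑ j, (Ξhat' - Θstar) i j ^ 2) + ∑ i, ∑ j, (Θhat' - Ξhat') i j ^ 2)
        - ((∑ i, ∑ j, (Ξhat - Θstar) i j ^ 2) + ∑ i, ∑ j, (Θhat - Ξhat) i j ^ 2)
      = ∑ i, (((∑ j, (Ξhat' - Θstar) i j ^ 2) + ∑ j, (Θhat' - Ξhat') i j ^ 2)
          - ((∑ j, (Ξhat - Θstar) i j ^ 2) + ∑ j, (Θhat - Ξhat) i j ^ 2)) := by
        rw [Finset.sum_sub_distrib, Finset.sum_add_distrib, Finset.sum_add_distrib]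
    _ ≤ ∑ i, (-(γ * α / N) * (((Θhat' - Θstar).mulVec φ) i ^ 2)
          - (2 * γ * β ^ 2 / N) * (((Θbar - Ξhat).mulVec φ) i ^ 2)) :=
        Finset.sum_le_sum fun i _ => hgoal i
    _ = -(γ * α / N) * (∑ i, ((Θhat' - Θstar).mulVec φ) i ^ 2)
        - (2 * γ * β ^ 2 / N) * (∑ i, ((Θbar - Ξhat).mulVec φ) i ^ 2) := by
        rw [Finset.sum_sub_distrib, ← Finset.mul_sum, ← Finset.mul_sum]
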